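/- For every a₀ > 0, every c > 0, every G̃ > 0, every integer M ≥ 2 and every integer r ≥ 2 there exist ε_r ∈ (0,1) and positive constants c₂, c₃, …, c_r such that the following holds. Let Ĵ : ℤ → ℂ satisfy |Ĵ(q)| ≥ c for all q ∉ {1, −1}, for each 2 ≤ n ≤ M let g_n : ℤ^n → ℂ satisfy |g_n| ≤ G̃ everywhere, and let P : ℤ → ℂ satisfy P(−q) = conj(P(q)) for all q ∈ ℤ, |P(q)| ≤ a₀/q² for all q ≠ 0, sup_{q∈ℤ} |P(q)| = |P(1)| =: ε ≤ ε_r, and the harmonic-balance equation Ĵ(q)·P(q) = Σ_{n=2}^{M} S(g_n,n,P)(q) for all q ∉ {1, −1}. Then |P(q)| ≤ c_{|q|}·ε^{|q|} for every q with 2 ≤ |q| ≤ r, and |P(q)| ≤ c_r·ε^{r} for every q with |q| > r. (In particular Worman's law |P(q)| ≲ |P(1)|^{|q|} holds up to any prescribed rank r once the amplitude |P(1)| is small enough.) -/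

import Mathlib

/-- For `q : ℤ` and `k = (k₁, …, k_m) : Fin m → ℤ`, `diffs q k i` is the `i`-th successive
difference in the chain `q, k₁, k₂, …, k_m, 0`; i.e. `diffs q k 0 = q - k₁`,
`diffs q k i = kᵢ - k_{i+1}` for `1 ≤ i ≤ m - 1`, and `diffs q k m = k_m`. -/
def diffs (q : ℤ) {m : ℕ} (k : Fin m → ℤ) (i : ℕ) : ℤ :=
  (q :: (List.ofFn k ++ [0])).getD i 0 - (q :: (List.ofFn k ++ [0])).getD (i + 1) 0

/-- `Sg n g P q = Σ_{k₁,…,k_{n-1} ∈ ℤ} g(q,k₁,…,k_{n-1}) · P(q-k₁)·P(k₁-k₂)⋯P(k_{n-1})`,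
the convolution-type multiple series with kernel `g`. -/
noncomputable def Sg (n : ℕ) (g : (Fin n → ℤ) → ℂ) (P : ℤ → ℂ) (q : ℤ) : ℂ :=
  ∑' k : Fin (n - 1) → ℤ,
    g (fun i : Fin n => (q :: List.ofFn k).getD (i : ℕ) 0) *
      ∏ i ∈ Finset.range n, P (diffs q k i)


open scoped ENNReal



noncomputable def wV (d : ℤ) : ℝ≥0∞ := ((max d.natAbs 1 : ℕ) : ℝ≥0∞) ^ (-((4:ℝ)/3))

noncomputable def ΩV : ℝ≥0∞ := ∑' d : ℤ, wV d

def βe (t : ℝ) (d : ℤ) : ℝ := min ((max d.natAbs 1 : ℕ) : ℝ) t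

lemma one_le_base (d : ℤ) : (1:ℝ≥0∞) ≤ ((max d.natAbs 1 : ℕ) : ℝ≥0∞) := by
  exact_mod_cast Nat.one_le_cast.mpr (le_max_right _ _)

lemma base_ne_top (d : ℤ) : ((max d.natAbs 1 : ℕ) : ℝ≥0∞) ≠ ⊤ := ENNReal.natCast_ne_top _

lemma one_le_base_rpow (d : ℤ) : (1:ℝ≥0∞) ≤ ((max d.natAbs 1 : ℕ) : ℝ≥0∞) ^ ((4:ℝ)/3) :=
  calc (1:ℝ≥0∞) = 1 ^ ((4:ℝ)/3) := (ENNReal.one_rpow _).symm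
  _ ≤ _ := ENNReal.rpow_le_rpow (one_le_base d) (by norm_num)

lemma wV_le_one (d : ℤ) : wV d ≤ 1 := by
  rw [wV, ENNReal.rpow_neg]
  exact ENNReal.inv_le_one.mpr (one_le_base_rpow d)

lemma wV_zero : wV 0 = 1 := by
  simp [wV]

lemma wV_ne_zero (d : ℤ) : wV d ≠ 0 := by
  rw [wV, ENNReal.rpow_neg, ne_eq, ENNReal.inv_eq_zero]
  exact ENNReal.rpow_ne_top_of_nonneg (by norm_num) (base_ne_top d)

lemma one_le_ΩV : 1 ≤ ΩV := by
  calc (1:ℝ≥0∞) = wV 0 := wV_zero.symm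
  _ ≤ _ := ENNReal.le_tsum 0


lemma summable_aux : Summable (fun d : ℤ => ((max d.natAbs 1 : ℕ) : ℝ) ^ (-((4:ℝ)/3))) := by
  have h1 : Summable (fun d : ℤ => |(d:ℝ)| ^ (-((4:ℝ)/3))) :=
    Real.summable_abs_int_rpow (by norm_num)
  have h2 : Summable (fun d : ℤ => if d = 0 then (1:ℝ) else 0) :=
    (hasSum_ite_eq (0:ℤ) (1:ℝ)).summable
  have := h1.add h2
  refine this.congr fun d => ?_
  by_cases hd : d = 0
  · subst hd; norm_num
  · have : (d.natAbs : ℝ) = |(d:ℝ)| := by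
      rw [Nat.cast_natAbs]; push_cast; ring
    simp [hd, max_eq_left (Nat.one_le_iff_ne_zero.mpr (Int.natAbs_ne_zero.mpr hd)), this]

lemma wV_eq_ofReal (d : ℤ) :
    wV d = ENNReal.ofReal (((max d.natAbs 1 : ℕ) : ℝ) ^ (-((4:ℝ)/3))) := by
  rw [wV, ← ENNReal.ofReal_natCast, ENNReal.ofReal_rpow_of_pos (by positivity)]

lemma ΩV_ne_top : ΩV ≠ ⊤ := by
  rw [ΩV, tsum_congr wV_eq_ofReal,
    ← ENNReal.ofReal_tsum_of_nonneg (fun d => by positivity) summable_aux]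
  exact ENNReal.ofReal_ne_top


lemma wv_quad (a b : ℤ) (h : (a + b).natAbs ≤ 2 * a.natAbs) : wV a ≤ 4 * wV (a + b) := by
  set Na : ℝ≥0∞ := ((max a.natAbs 1 : ℕ) : ℝ≥0∞) with hNa
  have hN : ((max (a+b).natAbs 1 : ℕ) : ℝ≥0∞) ≤ 2 * Na := by
    have hn : (max (a+b).natAbs 1) ≤ 2 * max a.natAbs 1 := by
      rcases max_cases (a+b).natAbs 1 with ⟨he,hc⟩|⟨he,hc⟩ <;>
      rcases max_cases a.natAbs 1 with ⟨he2,hc2⟩|⟨he2,hc2⟩ <;> rw [he, he2] <;> omega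
    rw [hNa]
    exact_mod_cast hn
  have h24 : ((2:ℝ≥0∞)) ^ ((4:ℝ)/3) ≤ 4 := by
    calc (2:ℝ≥0∞) ^ ((4:ℝ)/3) ≤ 2 ^ (2:ℝ) :=
      ENNReal.rpow_le_rpow_of_exponent_le (by norm_num) (by norm_num)
    _ = 4 := by
      rw [show ((2:ℝ)) = ((2:ℕ):ℝ) by norm_num, ENNReal.rpow_natCast]; norm_num
  have key : (4:ℝ≥0∞)⁻¹ * wV a ≤ wV (a + b) := by
    rw [wV, wV, ENNReal.rpow_neg, ENNReal.rpow_neg, ← hNa]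
    have h1 : ((max (a+b).natAbs 1 : ℕ) : ℝ≥0∞) ^ ((4:ℝ)/3) ≤ (2 * Na) ^ ((4:ℝ)/3) :=
      ENNReal.rpow_le_rpow hN (by norm_num)
    have h2 : (2 * Na) ^ ((4:ℝ)/3) ≤ 4 * Na ^ ((4:ℝ)/3) := by
      rw [ENNReal.mul_rpow_of_nonneg _ _ (by norm_num : (0:ℝ) ≤ 4/3)]
      exact mul_le_mul_left h24 _
    calc (4:ℝ≥0∞)⁻¹ * (Na ^ ((4:ℝ)/3))⁻¹ = (4 * Na ^ ((4:ℝ)/3))⁻¹ := by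
          rw [ENNReal.mul_inv (by norm_num) (by norm_num)]
    _ ≤ _ := ENNReal.inv_le_inv.mpr (h1.trans h2)
  calc wV a = 4 * (4⁻¹ * wV a) := by
        rw [← mul_assoc, ENNReal.mul_inv_cancel (by norm_num) (by norm_num), one_mul]
  _ ≤ 4 * wV (a + b) := mul_le_mul_right key _

lemma wv_point (q d : ℤ) : wV d * wV (q - d) ≤ 4 * wV q * (wV d + wV (q - d)) := by
  rcases le_total (q - d).natAbs d.natAbs with h | h
  · have : wV d ≤ 4 * wV q := by
      have := wv_quad d (q - d) (by
        have := Int.natAbs_add_le d (q - d); omega)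
      simpa using this
    calc wV d * wV (q - d) ≤ (4 * wV q) * wV (q - d) := mul_le_mul_left this _
    _ ≤ 4 * wV q * (wV d + wV (q - d)) := mul_le_mul_right le_add_self _
  · have : wV (q - d) ≤ 4 * wV q := by
      have := wv_quad (q - d) d (by
        have := Int.natAbs_add_le (q - d) d; omega)
      simpa using this
    calc wV d * wV (q - d) ≤ wV d * (4 * wV q) := mul_le_mul_right this _
    _ = (4 * wV q) * wV d := mul_comm _ _
    _ ≤ 4 * wV q * (wV d + wV (q - d)) := mul_le_mul_right le_self_add _

lemma tsum_wV_sub (q : ℤ) : ∑' d : ℤ, wV (q - d) = ΩV :=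
  Equiv.tsum_eq (Equiv.subLeft q) wV

lemma wV_conv (q : ℤ) : ∑' d : ℤ, wV d * wV (q - d) ≤ 8 * ΩV * wV q := by
  calc ∑' d : ℤ, wV d * wV (q - d) ≤ ∑' d : ℤ, 4 * wV q * (wV d + wV (q - d)) :=
        ENNReal.tsum_le_tsum fun d => wv_point q d
  _ = 4 * wV q * (ΩV + ΩV) := by
        rw [ENNReal.tsum_mul_left, ENNReal.tsum_add, tsum_wV_sub, ΩV]
  _ = 8 * ΩV * wV q := by ring


lemma one_le_Nd (d : ℤ) : (1:ℝ) ≤ ((max d.natAbs 1 : ℕ) : ℝ) := by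
  exact_mod_cast Nat.one_le_cast.mpr (le_max_right _ _)

lemma βe_nonneg {t : ℝ} (ht : 0 ≤ t) (d : ℤ) : 0 ≤ βe t d :=
  le_min (le_trans (by norm_num) (one_le_Nd d)) ht

lemma βe_le_t (t : ℝ) (d : ℤ) : βe t d ≤ t := min_le_right _ _

lemma βe_mono {t u : ℝ} (h : t ≤ u) (d : ℤ) : βe t d ≤ βe u d :=
  min_le_min le_rfl h

lemma Nd_triangle (a b : ℤ) :
    ((max (a+b).natAbs 1 : ℕ) : ℝ) ≤ ((max a.natAbs 1 : ℕ) : ℝ) + ((max b.natAbs 1 : ℕ) : ℝ) := by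
  have h := Int.natAbs_add_le a b
  have hn : max (a+b).natAbs 1 ≤ max a.natAbs 1 + max b.natAbs 1 := by
    rcases max_cases (a+b).natAbs 1 with ⟨he,hc⟩|⟨he,hc⟩ <;>
      rcases max_cases a.natAbs 1 with ⟨he2,hc2⟩|⟨he2,hc2⟩ <;>
      rcases max_cases b.natAbs 1 with ⟨he3,hc3⟩|⟨he3,hc3⟩ <;>
      rw [he, he2, he3] <;> omega
  exact_mod_cast hn

lemma βe_X1 {t : ℝ} (ht : 0 ≤ t) (a b : ℤ) :
    βe (min (2*t) (t+1)) (a+b) ≤ βe t a + βe t b := by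
  simp only [βe]
  set Nab : ℝ := ((max (a+b).natAbs 1 : ℕ) : ℝ) with hNab
  set Na : ℝ := ((max a.natAbs 1 : ℕ) : ℝ) with hNa
  set Nb : ℝ := ((max b.natAbs 1 : ℕ) : ℝ) with hNb
  have h1 : (1:ℝ) ≤ Na := one_le_Nd a
  have h2 : (1:ℝ) ≤ Nb := one_le_Nd b
  have h3 : Nab ≤ Na + Nb := Nd_triangle a b
  have hkey : min (2*t) (t+1) ≤ t + min 1 t := by
    rcases le_total (1:ℝ) t with h|h
    · have he : min (1:ℝ) t = 1 := min_eq_left h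
      rw [he]; linarith [min_le_right (2*t) (t+1)]
    · have he : min (1:ℝ) t = t := min_eq_right h
      rw [he]; linarith [min_le_left (2*t) (t+1)]
  by_cases hA : Na ≤ t
  · by_cases hB : Nb ≤ t
    · rw [min_eq_left hA, min_eq_left hB]
      exact le_trans (min_le_left _ _) h3
    · rw [min_eq_left hA, min_eq_right (le_of_not_ge hB)]
      have hm1 : min (1:ℝ) t ≤ 1 := min_le_left _ _
      have := min_le_right Nab (min (2*t) (t+1))
      linarith
  · rw [min_eq_right (le_of_not_ge hA)]
    have hm : min (1:ℝ) t ≤ min Nb t := min_le_min h2 le_rfl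
    have := min_le_right Nab (min (2*t) (t+1))
    linarith


noncomputable def Gs (Φ : ℤ → ℝ≥0∞) (m : ℕ) (q : ℤ) : ℝ≥0∞ :=
  ∑' k : Fin m → ℤ, ∏ i ∈ Finset.range (m+1), Φ (diffs q k i)

lemma diffs_nil (q : ℤ) (k : Fin 0 → ℤ) : diffs q k 0 = q := by
  simp [diffs]

lemma ofFn_cons {m : ℕ} (d : ℤ) (k : Fin m → ℤ) :
    List.ofFn (Fin.cons d k) = d :: List.ofFn k := by
  rw [List.ofFn_succ]
  simp

lemma diffs_cons_zero {m : ℕ} (q d : ℤ) (k : Fin m → ℤ) :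
    diffs q (Fin.cons d k) 0 = q - d := by
  simp [diffs, ofFn_cons]

lemma diffs_cons_succ {m : ℕ} (q d : ℤ) (k : Fin m → ℤ) (i : ℕ) :
    diffs q (Fin.cons d k) (i+1) = diffs d k i := by
  simp [diffs, ofFn_cons]

lemma Gs_zero (Φ : ℤ → ℝ≥0∞) (q : ℤ) : Gs Φ 0 q = Φ q := by
  rw [Gs]
  rw [tsum_eq_single (fun i => (0:ℤ)) (by intro b hb; exact absurd (Subsingleton.elim _ _) hb)]
  simp [diffs_nil]

lemma Gs_succ (Φ : ℤ → ℝ≥0∞) (m : ℕ) (q : ℤ) :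
    Gs Φ (m+1) q = ∑' d : ℤ, Φ (q - d) * Gs Φ m d := by
  rw [Gs, ← Equiv.tsum_eq (Fin.consEquiv (fun _ : Fin (m+1) => ℤ)), ENNReal.tsum_prod']
  refine tsum_congr fun d => ?_
  have hterm : ∀ k : Fin m → ℤ,
      (∏ i ∈ Finset.range (m+1+1), Φ (diffs q ((Fin.consEquiv fun _ => ℤ) (d, k)) i)) =
        Φ (q - d) * ∏ i ∈ Finset.range (m+1), Φ (diffs d k i) := by
    intro k
    have hce : ((Fin.consEquiv fun _ : Fin (m+1) => ℤ) (d, k) : Fin (m+1) → ℤ) = Fin.cons d k := rfl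
    rw [hce, Finset.prod_range_succ', diffs_cons_zero, mul_comm]
    congr 1
    exact Finset.prod_congr rfl fun i _ => by rw [diffs_cons_succ]
  rw [tsum_congr hterm, ENNReal.tsum_mul_left, Gs]

lemma conv_bound (Φ : ℤ → ℝ≥0∞) (E A : ℝ≥0∞) (t : ℝ)
    (hE0 : E ≠ 0) (hEtop : E ≠ ⊤) (hE1 : E ≤ 1) (ht : 0 ≤ t)
    (hΦ : ∀ d, Φ d ≤ A * E ^ (βe t d) * wV d) :
    ∀ m q, Gs Φ m q ≤
      (8 * ΩV * A)^m * A * E ^ (βe (if m = 0 then t else min (2*t) (t+1)) q) * wV q := by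
  intro m
  induction m with
  | zero =>
      intro q
      simpa [Gs_zero] using hΦ q
  | succ m IH =>
      intro q
      have htt' : t ≤ min (2*t) (t+1) := le_min (by linarith) (by linarith)
      have hu : t ≤ (if m = 0 then t else min (2*t) (t+1)) := by
        split <;> [exact le_rfl; exact htt']
      set u : ℝ := if m = 0 then t else min (2*t) (t+1) with hudef
      set t' : ℝ := min (2*t) (t+1) with ht'def
      set Cm : ℝ≥0∞ := (8 * ΩV * A)^m * A with hCm
      have hterm : ∀ d : ℤ, Φ (q - d) * Gs Φ m d ≤
          (A * Cm * E ^ (βe t' q)) * (wV d * wV (q - d)) := by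
        intro d
        have h1 : Φ (q - d) * Gs Φ m d ≤
            (A * E ^ (βe t (q-d)) * wV (q-d)) * (Cm * E ^ (βe u d) * wV d) :=
          mul_le_mul' (hΦ _) (IH d)
        have hexp : βe t' q ≤ βe t (q-d) + βe u d := by
          have h2 := βe_X1 ht (q-d) d
          rw [sub_add_cancel] at h2
          exact h2.trans (by linarith [βe_mono hu d])
        have h3 : E ^ (βe t (q-d)) * E ^ (βe u d) ≤ E ^ (βe t' q) := by
          rw [← ENNReal.rpow_add _ _ hE0 hEtop]
          exact ENNReal.rpow_le_rpow_of_exponent_ge hE1 hexp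
        calc Φ (q - d) * Gs Φ m d ≤
            (A * E ^ (βe t (q-d)) * wV (q-d)) * (Cm * E ^ (βe u d) * wV d) := h1
        _ = (A * Cm) * (E ^ (βe t (q-d)) * E ^ (βe u d)) * (wV d * wV (q - d)) := by ring
        _ ≤ (A * Cm) * (E ^ (βe t' q)) * (wV d * wV (q - d)) := by
            exact mul_le_mul' (mul_le_mul' le_rfl h3) le_rfl
        _ = (A * Cm * E ^ (βe t' q)) * (wV d * wV (q - d)) := by ring
      have : Gs Φ (m+1) q ≤ (A * Cm * E ^ (βe t' q)) * (8 * ΩV * wV q) := by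
        rw [Gs_succ]
        calc ∑' d : ℤ, Φ (q - d) * Gs Φ m d
            ≤ ∑' d : ℤ, (A * Cm * E ^ (βe t' q)) * (wV d * wV (q - d)) :=
              ENNReal.tsum_le_tsum hterm
        _ = (A * Cm * E ^ (βe t' q)) * ∑' d : ℤ, wV d * wV (q - d) := ENNReal.tsum_mul_left
        _ ≤ _ := mul_le_mul' le_rfl (wV_conv q)
      refine this.trans (le_of_eq ?_)
      have : (if m + 1 = 0 then t else t') = t' := by simp
      rw [this, hCm]
      ring

lemma enntsum_norm_le {ι : Type*} (f : ι → ℂ) :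
    (‖∑' i, f i‖₊ : ℝ≥0∞) ≤ ∑' i, (‖f i‖₊ : ℝ≥0∞) := by
  by_cases hs : Summable f
  · have hn : Summable fun i => ‖f i‖ := summable_norm_iff.mpr hs
    calc (‖∑' i, f i‖₊ : ℝ≥0∞) = ENNReal.ofReal ‖∑' i, f i‖ := (ofReal_norm _).symm
    _ ≤ ENNReal.ofReal (∑' i, ‖f i‖) := ENNReal.ofReal_le_ofReal (norm_tsum_le_tsum_norm hn)
    _ = ∑' i, ENNReal.ofReal ‖f i‖ := ENNReal.ofReal_tsum_of_nonneg (fun i => norm_nonneg _) hn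
    _ = _ := tsum_congr fun i => ofReal_norm _
  · rw [tsum_eq_zero_of_not_summable hs]; simp

lemma Sg_le (m : ℕ) (g : (Fin (m+1) → ℤ) → ℂ) (P : ℤ → ℂ) (q : ℤ) (Gb' : ℝ≥0∞)
    (hg : ∀ v, (‖g v‖₊ : ℝ≥0∞) ≤ Gb') :
    (‖Sg (m+1) g P q‖₊ : ℝ≥0∞) ≤ Gb' * Gs (fun d => (‖P d‖₊ : ℝ≥0∞)) m q := by
  rw [Sg]
  simp only [Nat.add_sub_cancel]
  calc (‖∑' k : Fin m → ℤ, g (fun i : Fin (m+1) => (q :: List.ofFn k).getD (i : ℕ) 0) *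
        ∏ i ∈ Finset.range (m+1), P (diffs q k i)‖₊ : ℝ≥0∞)
      ≤ ∑' k : Fin m → ℤ, (‖g (fun i : Fin (m+1) => (q :: List.ofFn k).getD (i : ℕ) 0) *
        ∏ i ∈ Finset.range (m+1), P (diffs q k i)‖₊ : ℝ≥0∞) := enntsum_norm_le _
  _ ≤ ∑' k : Fin m → ℤ, Gb' * ∏ i ∈ Finset.range (m+1), (‖P (diffs q k i)‖₊ : ℝ≥0∞) := by
      refine ENNReal.tsum_le_tsum fun k => ?_
      rw [nnnorm_mul, ENNReal.coe_mul, nnnorm_prod, ENNReal.coe_finset_prod]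
      exact mul_le_mul' (hg _) le_rfl
  _ = Gb' * Gs (fun d => (‖P d‖₊ : ℝ≥0∞)) m q := by rw [ENNReal.tsum_mul_left, Gs]

noncomputable def tseq (r k : ℕ) : ℝ := min (r : ℝ) ((k+1)/3)

lemma tseq_nonneg (r k : ℕ) : 0 ≤ tseq r k :=
  le_min (by positivity) (by positivity)

lemma tseq_zero {r : ℕ} (hr : 2 ≤ r) : tseq r 0 = 1/3 := by
  rw [tseq, min_eq_right]
  · norm_num
  · have : (2:ℝ) ≤ (r:ℝ) := by exact_mod_cast hr
    linarith

lemma tseq_last (r : ℕ) : tseq r (3*r) = r := by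
  rw [tseq, min_eq_left]
  push_cast
  linarith

lemma tseq_step (r k : ℕ) : tseq r (k+1) ≤ min (2 * tseq r k) (tseq r k + 1) := by
  have h0 : (0:ℝ) ≤ (r:ℝ) := by positivity
  have hk0 : (0:ℝ) ≤ (k:ℝ) := by positivity
  simp only [tseq]
  push_cast
  rcases min_cases ((r:ℝ)) (((k:ℝ)+1)/3) with ⟨he, hle⟩ | ⟨he, hle⟩ <;> rw [he]
  · exact le_min (le_trans (min_le_left _ _) (by linarith))
      (le_trans (min_le_left _ _) (by linarith))
  · exact le_min (le_trans (min_le_right _ _) (by linarith))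
      (le_trans (min_le_right _ _) (by linarith))

lemma wV_one {d : ℤ} (h : d.natAbs = 1) : wV d = 1 := by
  simp [wV, h]

theorem stmt13 (a₀ c Gb : ℝ) (ha₀ : 0 < a₀) (hc : 0 < c) (hGb : 0 < Gb)
    (M : ℕ) (hM : 2 ≤ M) (r : ℕ) (hr : 2 ≤ r) :
    ∃ εᵣ ∈ Set.Ioo (0 : ℝ) 1, ∃ C : ℕ → ℝ,
      (∀ i : ℕ, 2 ≤ i → i ≤ r → 0 < C i) ∧
      ∀ J : ℤ → ℂ, (∀ q : ℤ, q ≠ 1 → q ≠ -1 → c ≤ ‖J q‖) →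
      ∀ g : (n : ℕ) → (Fin n → ℤ) → ℂ,
        (∀ n : ℕ, 2 ≤ n → n ≤ M → ∀ v : Fin n → ℤ, ‖g n v‖ ≤ Gb) →
      ∀ P : ℤ → ℂ,
        (∀ q : ℤ, P (-q) = starRingEnd ℂ (P q)) →
        (∀ q : ℤ, q ≠ 0 → ‖P q‖ ≤ a₀ / (q : ℝ) ^ 2) →
        (⨆ q : ℤ, ‖P q‖) = ‖P 1‖ →
        ‖P 1‖ ≤ εᵣ →
        (∀ q : ℤ, q ≠ 1 → q ≠ -1 → J q * P q = ∑ n ∈ Finset.Icc 2 M, Sg n (g n) P q) →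
        (∀ q : ℤ, 2 ≤ |q| → |q| ≤ (r : ℤ) → ‖P q‖ ≤ C q.natAbs * ‖P 1‖ ^ q.natAbs) ∧
        (∀ q : ℤ, (r : ℤ) < |q| → ‖P q‖ ≤ C r * ‖P 1‖ ^ r) := by
  classical
  set c' : ℝ≥0∞ := ENNReal.ofReal c with hc'def
  set Gb' : ℝ≥0∞ := ENNReal.ofReal Gb with hGb'def
  have hc'0 : c' ≠ 0 := by
    rw [hc'def, ne_eq, ENNReal.ofReal_eq_zero, not_le]; exact hc
  have hc't : c' ≠ ⊤ := ENNReal.ofReal_ne_top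
  set B : ℝ≥0∞ := 1 + (M:ℝ≥0∞) * c'⁻¹ * Gb' * (8*ΩV)^M with hBdef
  have h8Ωt : (8*ΩV : ℝ≥0∞) ≠ ⊤ := ENNReal.mul_ne_top (by norm_num) ΩV_ne_top
  have h8Ω1 : (1:ℝ≥0∞) ≤ 8*ΩV := by
    calc (1:ℝ≥0∞) ≤ ΩV := one_le_ΩV
    _ ≤ 8 * ΩV := le_mul_of_one_le_left' (by norm_num)
  have hBtop : B ≠ ⊤ := by
    rw [hBdef]
    refine ENNReal.add_ne_top.mpr ⟨ENNReal.one_ne_top, ?_⟩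
    exact ENNReal.mul_ne_top (ENNReal.mul_ne_top
      (ENNReal.mul_ne_top (ENNReal.natCast_ne_top M) (ENNReal.inv_ne_top.mpr hc'0))
      ENNReal.ofReal_ne_top) (ENNReal.pow_ne_top h8Ωt)
  have hB1 : (1:ℝ≥0∞) ≤ B := le_self_add
  set A : ℕ → ℝ≥0∞ :=
    fun k => Nat.rec (max (ENNReal.ofReal a₀) 1) (fun _ Ak => B * (max Ak 1)^M) k with hAdef
  have hA0 : A 0 = max (ENNReal.ofReal a₀) 1 := rfl
  have hAsucc : ∀ k, A (k+1) = B * (max (A k) 1)^M := fun _ => rfl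
  have hAtop : ∀ k, A k ≠ ⊤ := by
    intro k; induction k with
    | zero =>
        rw [hA0]
        exact (max_lt ENNReal.ofReal_lt_top ENNReal.one_lt_top).ne
    | succ k ih =>
        rw [hAsucc]
        exact ENNReal.mul_ne_top hBtop (ENNReal.pow_ne_top
          (max_lt ih.lt_top ENNReal.one_lt_top).ne)
  have hA1 : ∀ k, (1:ℝ≥0∞) ≤ A k := by
    intro k; induction k with
    | zero => rw [hA0]; exact le_max_right _ _
    | succ k ih =>
        rw [hAsucc]
        calc (1:ℝ≥0∞) ≤ B := hB1
        _ ≤ B * (max (A k) 1)^M :=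
            le_mul_of_one_le_right' (one_le_pow_of_one_le' (le_max_right _ _) M)
  set K := 3 * r with hKdef
  set CC : ℝ := max (A K).toReal 1 with hCCdef
  refine ⟨1/2, ⟨by norm_num, by norm_num⟩, fun _ => CC,
    fun i _ _ => lt_of_lt_of_le zero_lt_one (le_max_right _ _), ?_⟩
  intro J hJ g hg P _hconj hPd hsup hsmall heq
  have hbdd : BddAbove (Set.range fun q : ℤ => ‖P q‖) := by
    refine ⟨max a₀ ‖P 0‖, ?_⟩
    rintro x ⟨q, rfl⟩
    by_cases hq : q = 0
    · subst hq; exact le_max_right _ _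
    · refine le_trans (hPd q hq) (le_trans ?_ (le_max_left _ _))
      have h1 : (1:ℝ) ≤ (q:ℝ)^2 := by
        have h2 : (1:ℤ) ≤ q^2 := by
          rcases (by omega : q ≤ -1 ∨ 1 ≤ q) with h|h <;> nlinarith
        exact_mod_cast h2
      exact div_le_self ha₀.le h1
  have hPle : ∀ q : ℤ, ‖P q‖ ≤ ‖P 1‖ := fun q => by
    rw [← hsup]; exact le_ciSup hbdd q
  by_cases hz : ‖P 1‖ = 0
  · constructor
    · intro q hq2 _
      have hna : q.natAbs ≠ 0 := by
        have h1 : (q.natAbs : ℤ) = |q| := Int.natCast_natAbs q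
        omega
      have h0 : ‖P q‖ ≤ 0 := (hPle q).trans hz.le
      calc ‖P q‖ ≤ 0 := h0
      _ ≤ CC * ‖P 1‖ ^ q.natAbs := by
          rw [hz, zero_pow hna, mul_zero]
    · intro q _
      have h0 : ‖P q‖ ≤ 0 := (hPle q).trans hz.le
      calc ‖P q‖ ≤ 0 := h0
      _ ≤ CC * ‖P 1‖ ^ r := by
          rw [hz, zero_pow (by omega), mul_zero]
  -- main case
  set Φ : ℤ → ℝ≥0∞ := fun d => (‖P d‖₊ : ℝ≥0∞) with hΦdef
  set E : ℝ≥0∞ := (‖P 1‖₊ : ℝ≥0∞) with hEdef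
  have hΦofReal : ∀ d, Φ d = ENNReal.ofReal ‖P d‖ := fun d => (ofReal_norm _).symm
  have hEofReal : E = ENNReal.ofReal ‖P 1‖ := (ofReal_norm _).symm
  have hE0 : E ≠ 0 := by
    rw [hEofReal, ne_eq, ENNReal.ofReal_eq_zero, not_le]
    exact lt_of_le_of_ne (norm_nonneg _) (Ne.symm hz)
  have hEt : E ≠ ⊤ := by rw [hEofReal]; exact ENNReal.ofReal_ne_top
  have hE1 : E ≤ 1 := by
    rw [hEofReal, ← ENNReal.ofReal_one]
    exact ENNReal.ofReal_le_ofReal (le_trans hsmall (by norm_num))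
  have hΦE : ∀ d, Φ d ≤ E := fun d => by
    rw [hΦofReal, hEofReal]; exact ENNReal.ofReal_le_ofReal (hPle d)
  have hΦtop : ∀ d, Φ d ≠ ⊤ := fun d => by rw [hΦofReal]; exact ENNReal.ofReal_ne_top
  -- raw quadratic decay
  have hΦW : ∀ d : ℤ, Φ d ≤ A 0 * ((max d.natAbs 1 : ℕ) : ℝ≥0∞) ^ (-(2:ℝ)) := by
    intro d
    by_cases hd : d = 0
    · subst hd
      have h1 : ((max (0:ℤ).natAbs 1 : ℕ) : ℝ≥0∞) ^ (-(2:ℝ)) = 1 := by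
        norm_num
      rw [h1, mul_one]
      calc Φ 0 ≤ E := hΦE 0
      _ ≤ 1 := hE1
      _ ≤ A 0 := hA1 0
    · have h4 : ENNReal.ofReal ((d:ℝ)^2) = ((max d.natAbs 1 : ℕ) : ℝ≥0∞) ^ (2:ℝ) := by
        have hm : max d.natAbs 1 = d.natAbs :=
          max_eq_left (Nat.one_le_iff_ne_zero.mpr (Int.natAbs_ne_zero.mpr hd))
        have h5 : ((d:ℝ))^2 = ((d.natAbs^2 : ℕ) : ℝ) := by
          have h6 : ((d.natAbs : ℕ) : ℝ) = ((|d| : ℤ) : ℝ) := Nat.cast_natAbs (n := d)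
          push_cast [h6]
          rw [← abs_pow, abs_pow, sq_abs]
        rw [hm, h5, ENNReal.ofReal_natCast]
        rw [show ((2:ℝ)) = ((2:ℕ):ℝ) by norm_num, ENNReal.rpow_natCast]
        push_cast
        ring
      calc Φ d = ENNReal.ofReal ‖P d‖ := hΦofReal d
      _ ≤ ENNReal.ofReal (a₀ / (d:ℝ)^2) := ENNReal.ofReal_le_ofReal (hPd d hd)
      _ = ENNReal.ofReal a₀ * (ENNReal.ofReal ((d:ℝ)^2))⁻¹ := by
          rw [div_eq_mul_inv, ENNReal.ofReal_mul ha₀.le,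
            ENNReal.ofReal_inv_of_pos (by positivity)]
      _ = ENNReal.ofReal a₀ * ((max d.natAbs 1 : ℕ) : ℝ≥0∞) ^ (-(2:ℝ)) := by
          rw [h4, ENNReal.rpow_neg]
      _ ≤ A 0 * ((max d.natAbs 1 : ℕ) : ℝ≥0∞) ^ (-(2:ℝ)) := by
          rw [hA0]; exact mul_le_mul' (le_max_left _ _) le_rfl
  -- seed
  have hseed : ∀ d, Φ d ≤ A 0 * E ^ (βe (tseq r 0) d) * wV d := by
    intro d
    have hβ : βe (tseq r 0) d = 1/3 := by
      rw [tseq_zero hr, βe, min_eq_right]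
      exact le_trans (by norm_num) (one_le_Nd d)
    rw [hβ]
    by_cases hd0 : Φ d = 0
    · rw [hd0]; exact zero_le
    have hsplit : Φ d = Φ d ^ ((1:ℝ)/3) * Φ d ^ ((2:ℝ)/3) := by
      rw [← ENNReal.rpow_add _ _ hd0 (hΦtop d)]
      norm_num
    have ha : Φ d ^ ((1:ℝ)/3) ≤ E ^ ((1:ℝ)/3) := ENNReal.rpow_le_rpow (hΦE d) (by norm_num)
    have hb : Φ d ^ ((2:ℝ)/3) ≤ A 0 ^ ((2:ℝ)/3) * wV d := by
      calc Φ d ^ ((2:ℝ)/3)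
          ≤ (A 0 * ((max d.natAbs 1 : ℕ) : ℝ≥0∞) ^ (-(2:ℝ))) ^ ((2:ℝ)/3) :=
            ENNReal.rpow_le_rpow (hΦW d) (by norm_num)
      _ = A 0 ^ ((2:ℝ)/3) * (((max d.natAbs 1 : ℕ) : ℝ≥0∞) ^ (-(2:ℝ))) ^ ((2:ℝ)/3) :=
            ENNReal.mul_rpow_of_nonneg _ _ (by norm_num)
      _ = A 0 ^ ((2:ℝ)/3) * wV d := by
            rw [← ENNReal.rpow_mul, wV]
            norm_num
    have hA023 : A 0 ^ ((2:ℝ)/3) ≤ A 0 := by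
      calc A 0 ^ ((2:ℝ)/3) ≤ A 0 ^ (1:ℝ) :=
        ENNReal.rpow_le_rpow_of_exponent_le (hA1 0) (by norm_num)
      _ = A 0 := ENNReal.rpow_one _
    calc Φ d = Φ d ^ ((1:ℝ)/3) * Φ d ^ ((2:ℝ)/3) := hsplit
    _ ≤ E ^ ((1:ℝ)/3) * (A 0 ^ ((2:ℝ)/3) * wV d) := mul_le_mul' ha hb
    _ ≤ E ^ ((1:ℝ)/3) * (A 0 * wV d) := mul_le_mul' le_rfl (mul_le_mul' hA023 le_rfl)
    _ = A 0 * E ^ ((1:ℝ)/3) * wV d := by ring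
  -- bootstrap step
  have hstep : ∀ k, (∀ d, Φ d ≤ A k * E ^ (βe (tseq r k) d) * wV d) →
      ∀ d, Φ d ≤ A (k+1) * E ^ (βe (tseq r (k+1)) d) * wV d := by
    intro k hk d
    by_cases hna : d.natAbs = 1
    · have hw1 : wV d = 1 := wV_one hna
      have hβle : βe (tseq r (k+1)) d ≤ 1 := by
        rw [βe, hna]
        exact min_le_left _ _ |>.trans (by norm_num)
      calc Φ d ≤ E := hΦE d
      _ = E ^ (1:ℝ) := (ENNReal.rpow_one E).symm
      _ ≤ E ^ (βe (tseq r (k+1)) d) := ENNReal.rpow_le_rpow_of_exponent_ge hE1 hβle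
      _ = 1 * E ^ (βe (tseq r (k+1)) d) * wV d := by rw [hw1]; ring
      _ ≤ A (k+1) * E ^ (βe (tseq r (k+1)) d) * wV d :=
          mul_le_mul' (mul_le_mul' (hA1 (k+1)) le_rfl) le_rfl
    · have hd1 : d ≠ 1 := fun h => by simp [h] at hna
      have hd2 : d ≠ -1 := fun h => by simp [h] at hna
      have heqd := heq d hd1 hd2
      -- lower bound via J
      have h1 : c' * Φ d ≤ (‖J d * P d‖₊ : ℝ≥0∞) := by
        have h1a : c * ‖P d‖ ≤ ‖J d * P d‖ := by
          rw [norm_mul]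
          exact mul_le_mul_of_nonneg_right (hJ d hd1 hd2) (norm_nonneg _)
        calc c' * Φ d = ENNReal.ofReal (c * ‖P d‖) := by
              rw [ENNReal.ofReal_mul hc.le, hc'def, hΦofReal]
        _ ≤ ENNReal.ofReal ‖J d * P d‖ := ENNReal.ofReal_le_ofReal h1a
        _ = _ := ofReal_norm _
      have h2 : (‖J d * P d‖₊ : ℝ≥0∞) ≤
          ∑ n ∈ Finset.Icc 2 M, (‖Sg n (g n) P d‖₊ : ℝ≥0∞) := by
        rw [heqd, ← ENNReal.coe_finset_sum]
        exact ENNReal.coe_le_coe.mpr (nnnorm_sum_le _ _)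
      set D : ℝ≥0∞ := Gb' * ((8*ΩV)^M * (max (A k) 1)^M *
        E ^ (βe (tseq r (k+1)) d) * wV d) with hDdef
      have h3 : ∀ n ∈ Finset.Icc 2 M, (‖Sg n (g n) P d‖₊ : ℝ≥0∞) ≤ D := by
        intro n hn
        obtain ⟨h2n, hnM⟩ := Finset.mem_Icc.mp hn
        obtain ⟨m, rfl⟩ : ∃ m, n = m + 1 := ⟨n-1, by omega⟩
        have hgm : ∀ v, (‖g (m+1) v‖₊ : ℝ≥0∞) ≤ Gb' := fun v => by
          rw [show (‖g (m+1) v‖₊ : ℝ≥0∞) = ENNReal.ofReal ‖g (m+1) v‖ from (ofReal_norm _).symm, hGb'def]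
          exact ENNReal.ofReal_le_ofReal (hg (m+1) h2n hnM v)
        refine (Sg_le m (g (m+1)) P d Gb' hgm).trans ?_
        rw [hDdef]
        refine mul_le_mul' le_rfl ?_
        have hcb := conv_bound Φ E (A k) (tseq r k) hE0 hEt hE1 (tseq_nonneg r k) hk m d
        rw [if_neg (by omega)] at hcb
        refine hcb.trans ?_
        have hc1 : (8*ΩV*(A k))^m * (A k) ≤ (8*ΩV)^M * (max (A k) 1)^M := by
          rw [mul_pow]
          calc (8*ΩV)^m * (A k)^m * A k = (8*ΩV)^m * (A k)^(m+1) := by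
                rw [pow_succ]; ring
          _ ≤ (8*ΩV)^M * (max (A k) 1)^M := by
              have hp1 : (8*ΩV:ℝ≥0∞)^m ≤ (8*ΩV)^M := pow_le_pow_right₀ h8Ω1 (by omega)
              have hp2 : (A k)^(m+1) ≤ (max (A k) 1)^M := by
                calc (A k)^(m+1) ≤ (max (A k) 1)^(m+1) := pow_le_pow_left' (le_max_left _ _) _
                _ ≤ (max (A k) 1)^M := pow_le_pow_right₀ (le_max_right _ _) (by omega)
              exact mul_le_mul' hp1 hp2
        have hc2 : E ^ (βe (min (2*tseq r k) (tseq r k + 1)) d)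
            ≤ E ^ (βe (tseq r (k+1)) d) :=
          ENNReal.rpow_le_rpow_of_exponent_ge hE1 (βe_mono (tseq_step r k) d)
        exact mul_le_mul' (mul_le_mul' hc1 hc2) le_rfl
      have h4 : c' * Φ d ≤ (M : ℝ≥0∞) * D := by
        calc c' * Φ d ≤ ∑ n ∈ Finset.Icc 2 M, (‖Sg n (g n) P d‖₊ : ℝ≥0∞) := h1.trans h2
        _ ≤ ∑ _n ∈ Finset.Icc 2 M, D := Finset.sum_le_sum h3
        _ = ((Finset.Icc 2 M).card : ℝ≥0∞) * D := by
            rw [Finset.sum_const, nsmul_eq_mul]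
        _ ≤ (M : ℝ≥0∞) * D := by
            refine mul_le_mul' ?_ le_rfl
            exact_mod_cast Nat.card_Icc 2 M ▸ (by omega : M + 1 - 2 ≤ M)
      have h5 : Φ d = c'⁻¹ * (c' * Φ d) := by
        rw [← mul_assoc, ENNReal.inv_mul_cancel hc'0 hc't, one_mul]
      calc Φ d = c'⁻¹ * (c' * Φ d) := h5
      _ ≤ c'⁻¹ * ((M : ℝ≥0∞) * D) := mul_le_mul' le_rfl h4
      _ = ((M : ℝ≥0∞) * c'⁻¹ * Gb' * (8*ΩV)^M) * (max (A k) 1)^M *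
            E ^ (βe (tseq r (k+1)) d) * wV d := by
          rw [hDdef]; ring
      _ ≤ B * (max (A k) 1)^M * E ^ (βe (tseq r (k+1)) d) * wV d := by
          refine mul_le_mul' (mul_le_mul' (mul_le_mul' ?_ le_rfl) le_rfl) le_rfl
          rw [hBdef]
          exact le_add_self
      _ = A (k+1) * E ^ (βe (tseq r (k+1)) d) * wV d := by rw [hAsucc]
  -- iterate and conclude
  have hiter : ∀ k, ∀ d, Φ d ≤ A k * E ^ (βe (tseq r k) d) * wV d := by
    intro k; induction k with
    | zero => exact hseed
    | succ k ih => exact hstep k ih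
  have hfin : ∀ d, Φ d ≤ A K * E ^ (βe (r:ℝ) d) := by
    intro d
    have h := hiter K d
    rw [show tseq r K = (r:ℝ) from by rw [hKdef]; exact tseq_last r] at h
    calc Φ d ≤ A K * E ^ (βe (r:ℝ) d) * wV d := h
    _ ≤ A K * E ^ (βe (r:ℝ) d) * 1 := mul_le_mul' le_rfl (wV_le_one d)
    _ = _ := mul_one _
  have hCCle : (A K).toReal ≤ CC := le_max_left _ _
  have hL : ∀ q : ℤ, (Φ q).toReal = ‖P q‖ := fun q => by
    rw [hΦofReal q, ENNReal.toReal_ofReal (norm_nonneg _)]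
  have hEre : E.toReal = ‖P 1‖ := by
    rw [hEofReal, ENNReal.toReal_ofReal (norm_nonneg _)]
  constructor
  · intro q hq2 hqr
    have hnq : (q.natAbs : ℤ) = |q| := Int.natCast_natAbs q
    rw [← hnq] at hq2 hqr
    have h2n : 2 ≤ q.natAbs := by exact_mod_cast hq2
    have hnr : q.natAbs ≤ r := by exact_mod_cast hqr
    have hβ : βe (r:ℝ) q = (q.natAbs : ℝ) := by
      rw [βe]
      have h1 : max q.natAbs 1 = q.natAbs := max_eq_left (by omega)
      rw [h1, min_eq_left (by exact_mod_cast hnr)]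
    have h := hfin q
    rw [hβ, ENNReal.rpow_natCast] at h
    have hRt : A K * E ^ q.natAbs ≠ ⊤ := ENNReal.mul_ne_top (hAtop K) (ENNReal.pow_ne_top hEt)
    have h2 := ENNReal.toReal_mono hRt h
    rw [hL q, ENNReal.toReal_mul, ENNReal.toReal_pow, hEre] at h2
    calc ‖P q‖ ≤ (A K).toReal * ‖P 1‖ ^ q.natAbs := h2
    _ ≤ CC * ‖P 1‖ ^ q.natAbs := mul_le_mul_of_nonneg_right hCCle (by positivity)
  · intro q hqr
    have hnq : (q.natAbs : ℤ) = |q| := Int.natCast_natAbs q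
    rw [← hnq] at hqr
    have hrn : r < q.natAbs := by exact_mod_cast hqr
    have hβ : βe (r:ℝ) q = (r:ℝ) := by
      rw [βe, min_eq_right]
      have h1 : r ≤ max q.natAbs 1 := by omega
      exact_mod_cast h1
    have h := hfin q
    rw [hβ, ENNReal.rpow_natCast] at h
    have hRt : A K * E ^ r ≠ ⊤ := ENNReal.mul_ne_top (hAtop K) (ENNReal.pow_ne_top hEt)
    have h2 := ENNReal.toReal_mono hRt h
    rw [hL q, ENNReal.toReal_mul, ENNReal.toReal_pow, hEre] at h2
    calc ‖P q‖ ≤ (A K).toReal * ‖P 1‖ ^ r := h2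
    _ ≤ CC * ‖P 1‖ ^ r := mul_le_mul_of_nonneg_right hCCle (by positivity)
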